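/- Let V be an inner product space over ℂ, let ι be a finite index type, and let b : ι → V be an orthonormal basis of V. Let O and O' be linear isometries (unitaries) of V that agree on all basis vectors outside a subset S ⊆ ι, i.e. O (b i) = O' (b i) for all i ∉ S. Then for every ψ ∈ V, ‖O ψ − O' ψ‖ ≤ 2 · √(Σ_{i∈S} |⟪b i, ψ⟫|²); that is, the disturbance caused by swapping O for O' is at most twice the norm of the component of ψ lying in the span of the basis vectors indexed by S. -/

import Mathlib

/-- **Abstract query-perturbation bound.** If two unitaries `O, O'` of an inner product
space `V` agree on all vectors of an orthonormal basis `b` outside a subset `S` of the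
index set, then for every `ψ`, `‖O ψ − O' ψ‖ ≤ 2 √(∑_{i ∈ S} |⟪b i, ψ⟫|²)`. -/
theorem unitary_swap_disturbance_bound
    {V : Type*} [NormedAddCommGroup V] [InnerProductSpace ℂ V]
    {ι : Type*} [Fintype ι] (b : OrthonormalBasis ι ℂ V)
    (O O' : V ≃ₗᵢ[ℂ] V) (S : Finset ι)
    (h : ∀ i ∉ S, O (b i) = O' (b i)) (ψ : V) :
    ‖O ψ - O' ψ‖ ≤ 2 * Real.sqrt (∑ i ∈ S, ‖(inner ℂ (b i) ψ : ℂ)‖ ^ 2) := by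
  classical
  set c : ι → ℂ := fun i => inner ℂ (b i) ψ with hc
  set φ : V := ∑ i ∈ S, c i • b i with hφ
  have hψ : ψ = ∑ i, c i • b i := by
    conv_lhs => rw [← b.sum_repr ψ]
    refine Finset.sum_congr rfl fun i _ => ?_
    rw [b.repr_apply_apply]
  have hrest : O (ψ - φ) = O' (ψ - φ) := by
    have : ψ - φ = ∑ i ∈ Sᶜ, c i • b i := by
      rw [hψ, hφ, ← Finset.sum_compl_add_sum S (fun i => c i • b i)]
      abel
    rw [this, map_sum, map_sum]
    refine Finset.sum_congr rfl fun i hi => ?_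
    rw [map_smul, map_smul, h i (Finset.mem_compl.mp hi)]
  have hdiff : O ψ - O' ψ = O φ - O' φ := by
    have h1 : O ψ = O (ψ - φ) + O φ := by rw [← map_add]; congr 1; abel
    have h2 : O' ψ = O' (ψ - φ) + O' φ := by rw [← map_add]; congr 1; abel
    rw [h1, h2, hrest]; abel
  have hφnorm : ‖φ‖ = Real.sqrt (∑ i ∈ S, ‖c i‖ ^ 2) := by
    have hsq : ‖φ‖ ^ 2 = ∑ i ∈ S, ‖c i‖ ^ 2 := by
      have hip : (inner ℂ φ φ : ℂ) = ∑ i ∈ S, (starRingEnd ℂ) (c i) * c i :=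
        b.orthonormal.inner_sum c c S
      have h2 : ‖φ‖ ^ 2 = Complex.re (inner ℂ φ φ) := (inner_self_eq_norm_sq (𝕜 := ℂ) φ).symm
      rw [h2, hip, Complex.re_sum]
      refine Finset.sum_congr rfl fun i _ => ?_
      have : (starRingEnd ℂ) (c i) * c i = (Complex.normSq (c i) : ℂ) := by
        rw [mul_comm, Complex.mul_conj]
      rw [this, Complex.ofReal_re, Complex.normSq_eq_norm_sq]
    rw [← hsq, Real.sqrt_sq (norm_nonneg _)]
  calc ‖O ψ - O' ψ‖ = ‖O φ - O' φ‖ := by rw [hdiff]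
    _ ≤ ‖O φ‖ + ‖O' φ‖ := norm_sub_le _ _
    _ = 2 * ‖φ‖ := by rw [O.norm_map, O'.norm_map]; ring
    _ = 2 * Real.sqrt (∑ i ∈ S, ‖c i‖ ^ 2) := by rw [hφnorm]
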